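/- Let (X, r) be a non-degenerate set-theoretic solution of the Yang–Baxter equation with r(x,y) = (σ_x(y), τ_y(x)). Then the operation x ▷ y := τ_x(σ_{τ_y⁻¹(x)}(y)) makes (X, ▷) a rack. -/
import Mathlib


def rFst {X : Type*} (r : X × X → X × X) : X × X × X → X × X × X :=
  fun p => ((r (p.1, p.2.1)).1, (r (p.1, p.2.1)).2, p.2.2)

def rSnd {X : Type*} (r : X × X → X × X) : X × X × X → X × X × X :=
  fun p => (p.1, r (p.2.1, p.2.2))

def IsYB {X : Type*} (r : X × X → X × X) : Prop :=
  rFst r ∘ rSnd r ∘ rFst r = rSnd r ∘ rFst r ∘ rSnd r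

/-- A rack structure: each left translation is bijective and the operation
is left self-distributive. -/
def IsRack {X : Type*} (op : X → X → X) : Prop :=
  (∀ x : X, Function.Bijective (op x)) ∧
    ∀ x y z : X, op x (op y z) = op (op x y) (op x z)

theorem stmt8 {X : Type*} [Nonempty X] (r : X × X → X × X) (σ τ : X → X → X)
    (hr : ∀ x y : X, r (x, y) = (σ x y, τ y x))
    (hYB : IsYB r) (hrbij : Function.Bijective r)
    (hσbij : ∀ x : X, Function.Bijective (σ x))
    (hτbij : ∀ y : X, Function.Bijective (τ y)) :
    IsRack (fun x y => τ x (σ (Function.invFun (τ y) x) y)) := by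
  have hτr : ∀ y x : X, τ y (Function.invFun (τ y) x) = x :=
    fun y x => Function.rightInverse_invFun (hτbij y).2 x
  have hτl : ∀ y a : X, Function.invFun (τ y) (τ y a) = a :=
    fun y a => Function.leftInverse_invFun (hτbij y).1 a
  have key : ∀ x y z : X,
      (σ (σ x y) (σ (τ y x) z), τ (σ (τ y x) z) (σ x y), τ z (τ y x)) =
      ((σ x (σ y z), σ (τ (σ y z) x) (τ z y), τ (τ z y) (τ (σ y z) x)) : X × X × X) := by
    intro x y z
    have h := congrFun hYB (x, y, z)
    simpa [rFst, rSnd, hr, Function.comp] using h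
  have yb1 : ∀ x y z : X, σ (σ x y) (σ (τ y x) z) = σ x (σ y z) :=
    fun x y z => congrArg Prod.fst (key x y z)
  have yb2 : ∀ x y z : X, τ (σ (τ y x) z) (σ x y) = σ (τ (σ y z) x) (τ z y) :=
    fun x y z => congrArg (fun p => p.2.1) (key x y z)
  have yb3 : ∀ x y z : X, τ z (τ y x) = τ (τ z y) (τ (σ y z) x) :=
    fun x y z => congrArg (fun p => p.2.2) (key x y z)
  constructor
  · intro x
    have hf : Function.Bijective (fun y => σ (Function.invFun (τ y) x) y) := by
      constructor
      · intro y1 y2 h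
        simp only [] at h
        have h1 : r (Function.invFun (τ y1) x, y1) =
            (σ (Function.invFun (τ y1) x) y1, x) := by rw [hr, hτr]
        have h2 : r (Function.invFun (τ y2) x, y2) =
            (σ (Function.invFun (τ y2) x) y2, x) := by rw [hr, hτr]
        have h3 := hrbij.1 (h1.trans (by rw [h]; exact h2.symm))
        exact congrArg Prod.snd h3
      · intro w
        obtain ⟨⟨p1, p2⟩, hp⟩ := hrbij.2 (w, x)
        rw [hr] at hp
        have h1 : σ p1 p2 = w := congrArg Prod.fst hp
        have h2 : τ p2 p1 = x := congrArg Prod.snd hp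
        refine ⟨p2, ?_⟩
        have h3 : Function.invFun (τ p2) x = p1 := by rw [← h2, hτl]
        simp only [h3, h1]
    exact (hτbij x).comp hf
  · intro x y z
    simp only
    set c := Function.invFun (τ z) y with hc_def
    have hc : τ z c = y := hτr z y
    set d := Function.invFun (τ c) (Function.invFun (τ z) x) with hd_def
    have hcd : τ c d = Function.invFun (τ z) x := hτr c _
    have hd : τ z (τ c d) = x := by rw [hcd, hτr]
    have hya : τ y (τ (σ c z) d) = x := by
      have h := (yb3 d c z).symm.trans hd
      rwa [hc] at h
    have hinv_yx : Function.invFun (τ y) x = τ (σ c z) d := by rw [← hya, hτl]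
    have hinv_zx : Function.invFun (τ z) x = τ c d := hcd.symm
    rw [hinv_yx, hinv_zx]
    -- the element e with τ w e = x, where w = τ y (σ c z)
    have hwe : τ (τ y (σ c z)) (τ (σ (σ c z) y) d) = x := by
      have h := (yb3 d (σ c z) (τ z c)).symm
      rw [hc] at h
      exact h.trans hya
    have hinv_wx : Function.invFun (τ (τ y (σ c z))) x = τ (σ (σ c z) y) d := by
      rw [← hwe, hτl]
    -- the auxiliary identity V
    have hV : τ (σ (τ c d) z) (σ d c) = σ (τ (σ c z) d) y := by
      have h := yb2 d c z
      rwa [hc] at h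
    -- the element g with τ v g = u
    have hvg : τ (τ x (σ (τ c d) z)) (τ (σ (σ (τ c d) z) x) (σ d c)) =
        τ x (σ (τ (σ c z) d) y) := by
      have h := (yb3 (σ d c) (σ (τ c d) z) x).symm
      rw [hV] at h
      exact h
    have hinv_vu : Function.invFun (τ (τ x (σ (τ c d) z))) (τ x (σ (τ (σ c z) d) y)) =
        τ (σ (σ (τ c d) z) x) (σ d c) := by
      rw [← hvg, hτl]
    rw [hinv_wx, hinv_vu]
    have hσew : σ (τ (σ (σ c z) y) d) (τ y (σ c z)) =
        τ (σ (τ (σ c z) d) y) (σ d (σ c z)) := by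
      have h := (yb2 d (σ c z) (τ z c)).symm
      rwa [hc] at h
    have hσgv : σ (τ (σ (σ (τ c d) z) x) (σ d c)) (τ x (σ (τ c d) z)) =
        τ (σ (σ (τ (σ c z) d) y) x) (σ d (σ c z)) := by
      have h := (yb2 (σ d c) (σ (τ c d) z) x).symm
      rw [hV, yb1 d c z] at h
      exact h
    rw [hσew, hσgv]
    exact yb3 (σ d (σ c z)) (σ (τ (σ c z) d) y) x
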